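/- Let μ > 0, β > 0 and h > 0, let Pe = βh/(2μ) be the local Péclet number, let τ = (h/(2β))·(coth(Pe) − 1/Pe) be the SUPG stabilization parameter, and set ρ = exp(βh/μ). Then the effective diffusion μ + τβ² satisfies the amplification-factor identity (μ + τβ²)·(ρ + ρ⁻¹ − 2) = (βh/2)·(ρ − ρ⁻¹). -/

import Mathlib

/-- The hyperbolic cotangent, `coth θ = cosh θ / sinh θ`. -/
noncomputable def coth (θ : ℝ) : ℝ := Real.cosh θ / Real.sinh θ

/-- With `Pe = βh/(2μ)`, `τ = (h/(2β))·(coth Pe − 1/Pe)` and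
`ρ = exp(βh/μ)`, the effective diffusion `μ + τβ²` satisfies the
amplification-factor identity `(μ + τβ²)(ρ + ρ⁻¹ − 2) = (βh/2)(ρ − ρ⁻¹)`. -/
theorem stmt_6 (μ β h : ℝ) (hμ : 0 < μ) (hβ : 0 < β) (hh : 0 < h) :
    let Pe : ℝ := β * h / (2 * μ)
    let τ : ℝ := h / (2 * β) * (coth Pe - 1 / Pe)
    let ρ : ℝ := Real.exp (β * h / μ)
    (μ + τ * β ^ 2) * (ρ + ρ⁻¹ - 2) = (β * h / 2) * (ρ - ρ⁻¹) := by
  simp only [coth]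
  have hPe : 0 < β * h / (2 * μ) := by positivity
  set Pe : ℝ := β * h / (2 * μ) with hPedef
  have hPene : Pe ≠ 0 := ne_of_gt hPe
  set E : ℝ := Real.exp Pe with hEdef
  have hE : (0:ℝ) < E := Real.exp_pos _
  have hEne : E ≠ 0 := ne_of_gt hE
  have hE1 : 1 < E := by rw [hEdef]; simpa using Real.exp_lt_exp.mpr hPe
  have harg : β * h / μ = Pe + Pe := by rw [hPedef]; field_simp; ring
  have hρ : Real.exp (β * h / μ) = E ^ 2 := by
    rw [harg, Real.exp_add, ← hEdef]; ring
  have hsinh : Real.sinh Pe = (E - E⁻¹) / 2 := by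
    rw [Real.sinh_eq, Real.exp_neg, ← hEdef]
  have hcosh : Real.cosh Pe = (E + E⁻¹) / 2 := by
    rw [Real.cosh_eq, Real.exp_neg, ← hEdef]
  have hsne : E - E⁻¹ ≠ 0 := by
    have : E⁻¹ < 1 := inv_lt_one_of_one_lt₀ hE1
    have : E⁻¹ < E := lt_trans this hE1
    linarith
  have hh2 : h = 2 * μ * Pe / β := by rw [hPedef]; field_simp
  have hE2 : E ^ 2 - 1 ≠ 0 := by nlinarith
  rw [hρ, hsinh, hcosh, hh2]
  have hE3 : (-1 + E ^ 2) ≠ 0 := by intro hc; apply hE2; linarith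
  field_simp [hE3]
  ring
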